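/- Let Σ be a positive definite D×D real matrix, μ, b ∈ ℝ^D, and A ∈ ℝ^{D×R} a matrix of full column rank with R ≤ D. Set Σ̃ = (AᵀΣ⁻¹A)⁻¹, μ̃ = Σ̃AᵀΣ⁻¹(μ − b), P = Σ⁻¹ − Σ⁻¹AΣ̃AᵀΣ⁻¹, and s̃ = (2π)^{(R−D)/2} (det Σ̃)^{1/2} (det Σ)^{−1/2} exp(−(1/2)(μ−b)ᵀP(μ−b)). Then AᵀΣ⁻¹A is positive definite, and for every u ∈ ℝ^R, N_D(Au + b; μ, Σ) = s̃ · N_R(u; μ̃, Σ̃). In particular, if R = D and A is invertible, then Σ̃ = A⁻¹ΣA⁻ᵀ, μ̃ = A⁻¹(μ − b), and s̃ = |det A|⁻¹. -/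

import Mathlib

open Real Matrix

/-- The `D`-dimensional Gaussian density
`N_D(x; μ, Σ) = (2π)^(−D/2) (det Σ)^(−1/2) exp(−(1/2)(x−μ)ᵀΣ⁻¹(x−μ))`. -/
noncomputable def gaussDensity {D : ℕ} (μ : Fin D → ℝ) (C : Matrix (Fin D) (Fin D) ℝ)
    (x : Fin D → ℝ) : ℝ :=
  (2 * Real.pi) ^ (-(D : ℝ) / 2) * C.det ^ (-(1 : ℝ) / 2) *
    Real.exp (-(1 / 2) * ((x - μ) ⬝ᵥ C⁻¹.mulVec (x - μ)))

lemma dot_symm {n : ℕ} (Q : Matrix (Fin n) (Fin n) ℝ) (hQ : Qᵀ = Q) (x y : Fin n → ℝ) :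
    x ⬝ᵥ Q *ᵥ y = y ⬝ᵥ Q *ᵥ x := by
  rw [dotProduct_mulVec, ← mulVec_transpose, hQ, dotProduct_comm]

lemma dot_trans {D R : ℕ} (A : Matrix (Fin D) (Fin R) ℝ) (u : Fin R → ℝ) (w : Fin D → ℝ) :
    u ⬝ᵥ Aᵀ *ᵥ w = (A *ᵥ u) ⬝ᵥ w := by
  rw [dotProduct_mulVec, vecMul_transpose]

lemma inj_of_rank {D R : ℕ} (A : Matrix (Fin D) (Fin R) ℝ) (hA : A.rank = R) :
    Function.Injective A.mulVec := by
  have h := LinearMap.finrank_range_add_finrank_ker A.mulVecLin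
  rw [show Module.finrank ℝ (Fin R → ℝ) = R by simp] at h
  rw [Matrix.rank] at hA
  have hker : Module.finrank ℝ (LinearMap.ker A.mulVecLin) = 0 := by omega
  have hbot : LinearMap.ker A.mulVecLin = ⊥ := Submodule.finrank_eq_zero.mp hker
  have hinj := LinearMap.ker_eq_bot.mp hbot
  intro x y hxy
  exact hinj (by simpa [Matrix.mulVecLin_apply] using hxy)

/-- Affine reparametrization of a Gaussian density: for a full-column-rank `A`,
`N_D(Au + b; μ, Σ) = s̃ · N_R(u; μ̃, Σ̃)`, with the stated `Σ̃`, `μ̃`, `P` and `s̃`;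
in the square invertible case the expressions simplify to `Σ̃ = A⁻¹ΣA⁻ᵀ`,
`μ̃ = A⁻¹(μ − b)` and `s̃ = |det A|⁻¹`. -/
theorem stmt_14 (D R : ℕ) (hRD : R ≤ D)
    (C : Matrix (Fin D) (Fin D) ℝ) (hC : C.PosDef)
    (μ b : Fin D → ℝ)
    (A : Matrix (Fin D) (Fin R) ℝ) (hA : A.rank = R)
    (Ct : Matrix (Fin R) (Fin R) ℝ) (hCt : Ct = (Aᵀ * C⁻¹ * A)⁻¹)
    (mt : Fin R → ℝ) (hmt : mt = Ct.mulVec (Aᵀ.mulVec (C⁻¹.mulVec (μ - b))))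
    (P : Matrix (Fin D) (Fin D) ℝ) (hP : P = C⁻¹ - C⁻¹ * A * Ct * Aᵀ * C⁻¹)
    (st : ℝ) (hst : st = (2 * Real.pi) ^ (((R : ℝ) - D) / 2) *
      Real.sqrt Ct.det / Real.sqrt C.det *
      Real.exp (-(1 / 2) * ((μ - b) ⬝ᵥ P.mulVec (μ - b)))) :
    (Aᵀ * C⁻¹ * A).PosDef ∧
    (∀ u : Fin R → ℝ, gaussDensity μ C (A.mulVec u + b) = st * gaussDensity mt Ct u) ∧
    (∀ A' : Matrix (Fin D) (Fin D) ℝ, IsUnit A'.det →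
      (A'ᵀ * C⁻¹ * A')⁻¹ = A'⁻¹ * C * (A'⁻¹)ᵀ ∧
      ((A'ᵀ * C⁻¹ * A')⁻¹).mulVec (A'ᵀ.mulVec (C⁻¹.mulVec (μ - b))) =
        A'⁻¹.mulVec (μ - b) ∧
      (2 * Real.pi) ^ (((D : ℝ) - D) / 2) *
          Real.sqrt ((A'ᵀ * C⁻¹ * A')⁻¹).det / Real.sqrt C.det *
          Real.exp (-(1 / 2) * ((μ - b) ⬝ᵥ
            (C⁻¹ - C⁻¹ * A' * (A'ᵀ * C⁻¹ * A')⁻¹ * A'ᵀ * C⁻¹).mulVec (μ - b))) =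
        |A'.det|⁻¹) := by
  have hCdetu : IsUnit C.det := hC.det_pos.ne'.isUnit
  have hS : C⁻¹.PosDef := hC.inv
  have hSsym : C⁻¹ᵀ = C⁻¹ := by
    have := hS.isHermitian
    rwa [Matrix.IsHermitian, conjTranspose_eq_transpose_of_trivial] at this
  have hinj := inj_of_rank A hA
  have hMpd : (Aᵀ * C⁻¹ * A).PosDef := by
    refine Matrix.PosDef.of_dotProduct_mulVec_pos ?_ (fun x hx => ?_)
    · have := Matrix.isHermitian_conjTranspose_mul_mul A hS.isHermitian
      simpa [conjTranspose_eq_transpose_of_trivial] using this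
    · have hx' : A *ᵥ x ≠ 0 := fun h => hx (hinj (by simpa using h))
      have h2 := hS.dotProduct_mulVec_pos hx'
      have e : x ⬝ᵥ (Aᵀ * C⁻¹ * A) *ᵥ x = (A *ᵥ x) ⬝ᵥ C⁻¹ *ᵥ (A *ᵥ x) := by
        rw [← mulVec_mulVec, ← mulVec_mulVec, dot_trans]
      simpa [star_trivial, e] using h2
  have hMdet : IsUnit (Aᵀ * C⁻¹ * A).det := hMpd.det_pos.ne'.isUnit
  have hMsym : (Aᵀ * C⁻¹ * A)ᵀ = Aᵀ * C⁻¹ * A := by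
    have := hMpd.isHermitian
    rwa [Matrix.IsHermitian, conjTranspose_eq_transpose_of_trivial] at this
  have hCtpd : Ct.PosDef := hCt ▸ hMpd.inv
  have hCtinv : Ct⁻¹ = Aᵀ * C⁻¹ * A := by
    rw [hCt, Matrix.nonsing_inv_nonsing_inv _ hMdet]
  have hCtinvsym : (Ct⁻¹)ᵀ = Ct⁻¹ := by rw [hCtinv, hMsym]
  have hCtsym : Ctᵀ = Ct := by
    rw [hCt, Matrix.transpose_nonsing_inv, hMsym]
  have key : ∀ u : Fin R → ℝ, (A *ᵥ u + b - μ) ⬝ᵥ C⁻¹ *ᵥ (A *ᵥ u + b - μ)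
      = (u - mt) ⬝ᵥ Ct⁻¹ *ᵥ (u - mt) + (μ - b) ⬝ᵥ P *ᵥ (μ - b) := by
    intro u
    set v := μ - b with hv
    have hsub : A *ᵥ u + b - μ = A *ᵥ u - v := by rw [hv]; abel
    set a := A *ᵥ u with ha
    have hma : Ct⁻¹ *ᵥ mt = Aᵀ *ᵥ (C⁻¹ *ᵥ v) := by
      rw [hCtinv, hmt, mulVec_mulVec, mulVec_mulVec, mulVec_mulVec, hCt,
        Matrix.mul_nonsing_inv _ hMdet, Matrix.one_mul, ← mulVec_mulVec]
    have T1 : u ⬝ᵥ Ct⁻¹ *ᵥ u = a ⬝ᵥ C⁻¹ *ᵥ a := by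
      rw [hCtinv, ← mulVec_mulVec, ← mulVec_mulVec, dot_trans]
    have T2 : u ⬝ᵥ Ct⁻¹ *ᵥ mt = a ⬝ᵥ C⁻¹ *ᵥ v := by
      rw [hma, dot_trans]
    have T3 : mt ⬝ᵥ Ct⁻¹ *ᵥ u = a ⬝ᵥ C⁻¹ *ᵥ v := by
      rw [dot_symm _ hCtinvsym, T2]
    have hAmt : A *ᵥ mt = (A * Ct * Aᵀ * C⁻¹) *ᵥ v := by
      rw [hmt]; simp only [mulVec_mulVec, Matrix.mul_assoc]
    have T4 : mt ⬝ᵥ Ct⁻¹ *ᵥ mt = v ⬝ᵥ (C⁻¹ * A * Ct * Aᵀ * C⁻¹) *ᵥ v := by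
      rw [hma, dot_trans, hAmt, ← dot_trans]
      congr 1
      rw [← mulVec_mulVec, transpose_mul, transpose_mul, transpose_mul,
        transpose_transpose, hSsym, hCtsym]
      simp [Matrix.mul_assoc, mulVec_mulVec]
    have T5 : v ⬝ᵥ C⁻¹ *ᵥ a = a ⬝ᵥ C⁻¹ *ᵥ v := dot_symm _ hSsym v a
    rw [hsub, hP]
    simp only [mulVec_sub, Matrix.sub_mulVec, sub_dotProduct, dotProduct_sub]
    rw [T1, T2, T3, T4, T5]
    ring
  refine ⟨hMpd, fun u => ?_, fun A' hA' => ?_⟩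
  · have h2pi : (0:ℝ) < 2 * Real.pi := by positivity
    have hsplit : (2 * Real.pi) ^ (-(D:ℝ)/2)
        = (2 * Real.pi) ^ (((R:ℝ)-D)/2) * (2 * Real.pi) ^ (-(R:ℝ)/2) := by
      rw [← Real.rpow_add h2pi]; ring_nf
    have hCdet : C.det ^ (-(1:ℝ)/2) = (Real.sqrt C.det)⁻¹ := by
      rw [Real.sqrt_eq_rpow, ← Real.rpow_neg hC.det_pos.le]; norm_num
    have hCtdet : Ct.det ^ (-(1:ℝ)/2) = (Real.sqrt Ct.det)⁻¹ := by
      rw [Real.sqrt_eq_rpow, ← Real.rpow_neg hCtpd.det_pos.le]; norm_num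
    have hsC : Real.sqrt C.det ≠ 0 := (Real.sqrt_pos.mpr hC.det_pos).ne'
    have hsCt : Real.sqrt Ct.det ≠ 0 := (Real.sqrt_pos.mpr hCtpd.det_pos).ne'
    rw [gaussDensity, gaussDensity, hst]
    rw [show Matrix.mulVec A u = A *ᵥ u from rfl] at *
    rw [key u, show -(1/2 : ℝ) * ((u - mt) ⬝ᵥ Ct⁻¹ *ᵥ (u - mt) + (μ - b) ⬝ᵥ P *ᵥ (μ - b))
        = -(1/2) * ((u - mt) ⬝ᵥ Ct⁻¹ *ᵥ (u - mt)) + -(1/2) * ((μ - b) ⬝ᵥ P *ᵥ (μ - b)) from by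
      ring, Real.exp_add, hsplit, hCdet, hCtdet]
    field_simp
  · have hA'T : IsUnit A'ᵀ.det := by rwa [Matrix.det_transpose]
    have h1 : (A'ᵀ * C⁻¹ * A')⁻¹ = A'⁻¹ * C * (A'⁻¹)ᵀ := by
      rw [Matrix.mul_inv_rev, Matrix.mul_inv_rev, Matrix.nonsing_inv_nonsing_inv C hCdetu,
        Matrix.transpose_nonsing_inv, ← Matrix.mul_assoc]
    have hT : (A'⁻¹)ᵀ * A'ᵀ = 1 := by
      rw [Matrix.transpose_nonsing_inv, Matrix.nonsing_inv_mul _ hA'T]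
    refine ⟨h1, ?_, ?_⟩
    · rw [h1, mulVec_mulVec, mulVec_mulVec,
        Matrix.mul_assoc (A'⁻¹ * C) _ A'ᵀ, hT, Matrix.mul_one, Matrix.mul_assoc,
        Matrix.mul_nonsing_inv C hCdetu, Matrix.mul_one]
    · have hP0 : C⁻¹ - C⁻¹ * A' * (A'ᵀ * C⁻¹ * A')⁻¹ * A'ᵀ * C⁻¹ = 0 := by
      -- C⁻¹ * A' * (A'⁻¹ * C * A'⁻¹ᵀ) * A'ᵀ * C⁻¹ = C⁻¹
        rw [h1, sub_eq_zero]
        rw [show C⁻¹ * A' * (A'⁻¹ * C * (A'⁻¹)ᵀ) * A'ᵀ * C⁻¹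
            = C⁻¹ * (A' * A'⁻¹) * C * ((A'⁻¹)ᵀ * A'ᵀ) * C⁻¹ from by
          simp only [Matrix.mul_assoc],
          Matrix.mul_nonsing_inv _ hA', hT, Matrix.mul_one, Matrix.mul_one,
          Matrix.mul_assoc, Matrix.nonsing_inv_mul_cancel_left _ _ hCdetu]
      rw [hP0]
      have hdet : ((A'ᵀ * C⁻¹ * A')⁻¹).det = C.det * (A'.det⁻¹)^2 := by
        rw [h1, Matrix.det_mul, Matrix.det_mul, Matrix.det_transpose,
          Matrix.det_nonsing_inv, Ring.inverse_eq_inv]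
        ring
      have hsC : Real.sqrt C.det ≠ 0 := (Real.sqrt_pos.mpr hC.det_pos).ne'
      rw [hdet, Real.sqrt_mul hC.det_pos.le, Real.sqrt_sq_eq_abs, abs_inv,
        sub_self, zero_div, Real.rpow_zero, Matrix.zero_mulVec, dotProduct_zero,
        mul_zero, Real.exp_zero, one_mul, mul_one, mul_div_right_comm,
        div_self hsC, one_mul]
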